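/- For t > 0 let M_1(t) = N_1 and M_2(t) = N_1 + t N_2, where N_1 = E_{21}, N_2 = E_{31} are 3×3 matrix units. Then M_1(t)M_1(t)* + M_2(t)M_2(t)* = diag-block with lower-right 2×2 block [[2, t],[t, t²]], and its operator norm equals f(t)² where f(t) = √(1 + t²/2 + √(1 + t⁴/4)). Consequently R_k(t) = M_k(t)/f(t) for k = 1,2 defines a commuting nilpotent row contraction pair R(t) with R_1(t)² = R_1(t)R_2(t) = R_2(t)² = 0. -/

import Mathlib

open Matrix

/-- `f(t) = √(1 + t²/2 + √(1 + t⁴/4))`. -/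
noncomputable def fDA (t : ℝ) : ℝ :=
  Real.sqrt (1 + t ^ 2 / 2 + Real.sqrt (1 + t ^ 4 / 4))

set_option maxHeartbeats 2000000 in
open scoped ComplexOrder in
/-- with `M₁(t) = N₁`, `M₂(t) = N₁ + tN₂`, the defect `M₁M₁* + M₂M₂*` is the
stated matrix whose operator norm is `f(t)²`, and the normalized pair `R(t) = M(t)/f(t)` is a
commuting nilpotent row contraction with all products of length two equal to zero. -/
theorem stmt9 (t : ℝ) (ht : 0 < t) :
    letI N₁ : Matrix (Fin 3) (Fin 3) ℂ := Matrix.single 1 0 1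
    letI N₂ : Matrix (Fin 3) (Fin 3) ℂ := Matrix.single 2 0 1
    letI M₁ : Matrix (Fin 3) (Fin 3) ℂ := N₁
    letI M₂ : Matrix (Fin 3) (Fin 3) ℂ := N₁ + (t : ℂ) • N₂
    letI R₁ : Matrix (Fin 3) (Fin 3) ℂ := ((fDA t : ℂ))⁻¹ • M₁
    letI R₂ : Matrix (Fin 3) (Fin 3) ℂ := ((fDA t : ℂ))⁻¹ • M₂
    M₁ * M₁ᴴ + M₂ * M₂ᴴ =
      !![0, 0, 0; 0, 2, (t : ℂ); 0, (t : ℂ), (t : ℂ) ^ 2] ∧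
    ‖Matrix.toEuclideanCLM (𝕜 := ℂ) (M₁ * M₁ᴴ + M₂ * M₂ᴴ)‖ = fDA t ^ 2 ∧
    R₁ * R₂ = R₂ * R₁ ∧
    R₁ ^ 2 = 0 ∧ R₁ * R₂ = 0 ∧ R₂ * R₁ = 0 ∧ R₂ ^ 2 = 0 ∧
    (1 - (R₁ * R₁ᴴ + R₂ * R₂ᴴ)).PosSemidef := by
  set N₁ : Matrix (Fin 3) (Fin 3) ℂ := Matrix.single 1 0 1 with hN₁
  set N₂ : Matrix (Fin 3) (Fin 3) ℂ := Matrix.single 2 0 1 with hN₂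
  set M₂ : Matrix (Fin 3) (Fin 3) ℂ := N₁ + (t : ℂ) • N₂ with hM₂
  -- basic facts about the scalar `L = fDA t ^ 2`
  have hf0 : 0 < fDA t := Real.sqrt_pos.2 (by positivity)
  set s : ℝ := Real.sqrt (1 + t ^ 4 / 4) with hs_def
  have hs : s ^ 2 = 1 + t ^ 4 / 4 := Real.sq_sqrt (by positivity)
  have hs1 : 1 < s := by
    rw [show (1 : ℝ) = Real.sqrt 1 by simp, hs_def]
    exact Real.sqrt_lt_sqrt (by norm_num) (by nlinarith [pow_pos ht 4])
  have hst : t ^ 2 / 2 ≤ s := by nlinarith [Real.sqrt_nonneg (1 + t ^ 4 / 4)]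
  obtain ⟨L, hL_def⟩ : ∃ L : ℝ, fDA t ^ 2 = L := ⟨_, rfl⟩
  rw [hL_def]
  have hL : L = 1 + t ^ 2 / 2 + s := by
    rw [← hL_def, fDA, Real.sq_sqrt (by positivity)]
  have hL2 : 2 < L := by rw [hL]; nlinarith
  have hLt : t ^ 2 < L := by rw [hL]; nlinarith
  have hL0 : 0 < L := by linarith
  have hquad : L ^ 2 = (2 + t ^ 2) * L - t ^ 2 := by rw [hL]; linear_combination hs
  have hkey : (L - 2) * (L - t ^ 2) = t ^ 2 := by linear_combination hquad
  have hquadC : (L : ℂ) ^ 2 = ((2 : ℂ) + (t : ℂ) ^ 2) * (L : ℂ) - (t : ℂ) ^ 2 := by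
    exact_mod_cast congrArg (Complex.ofReal) hquad
  set c : ℂ := ((fDA t : ℂ))⁻¹ with hc
  set R₁ : Matrix (Fin 3) (Fin 3) ℂ := c • N₁ with hR₁def
  set R₂ : Matrix (Fin 3) (Fin 3) ℂ := c • M₂ with hR₂def
  set A : Matrix (Fin 3) (Fin 3) ℂ := !![0, 0, 0; 0, 2, (t : ℂ); 0, (t : ℂ), (t : ℂ) ^ 2] with hA
  -- part 1 : the defect matrix
  have h1 : N₁ * N₁ᴴ + M₂ * M₂ᴴ = A := by
    ext i j
    fin_cases i <;> fin_cases j <;>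
      simp [hN₁, hN₂, hM₂, hA, Matrix.mul_apply, Fin.sum_univ_three, Matrix.single,
        Matrix.conjTranspose_apply, Matrix.vecHead, Matrix.vecTail] <;> ring
  -- vanishing of all products of length two
  have hz : ∀ P Q : Matrix (Fin 3) (Fin 3) ℂ, P = N₁ ∨ P = M₂ → Q = N₁ ∨ Q = M₂ →
      (c • P) * (c • Q) = 0 := by
    rintro P Q (rfl | rfl) (rfl | rfl) <;>
    · ext i j
      fin_cases i <;> fin_cases j <;>
        simp [hN₁, hN₂, hM₂, Matrix.mul_apply, Fin.sum_univ_three, Matrix.single,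
          Matrix.smul_apply]
  have hR12 : R₁ * R₂ = 0 := by rw [hR₁def, hR₂def]; exact hz _ _ (Or.inl rfl) (Or.inr rfl)
  have hR21 : R₂ * R₁ = 0 := by rw [hR₁def, hR₂def]; exact hz _ _ (Or.inr rfl) (Or.inl rfl)
  have hR11 : R₁ ^ 2 = 0 := by rw [sq, hR₁def]; exact hz _ _ (Or.inl rfl) (Or.inl rfl)
  have hR22 : R₂ ^ 2 = 0 := by rw [sq, hR₂def]; exact hz _ _ (Or.inr rfl) (Or.inr rfl)
  -- norm computation
  have hnorm : ‖Matrix.toEuclideanCLM (𝕜 := ℂ) A‖ = L := by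
    set T := Matrix.toEuclideanCLM (𝕜 := ℂ) A with hT
    apply le_antisymm
    · -- upper bound
      apply ContinuousLinearMap.opNorm_le_bound _ hL0.le
      intro x
      have hTx : T x = (WithLp.equiv 2 _).symm (A *ᵥ (WithLp.equiv 2 _ x)) := rfl
      have e1 : A *ᵥ (WithLp.equiv 2 (Fin 3 → ℂ)) x
          = ![0, 2 * x 1 + (t : ℂ) * x 2, (t : ℂ) * x 1 + (t : ℂ) ^ 2 * x 2] := by
        funext i
        fin_cases i <;>
          simp [hA, Matrix.mulVec, dotProduct, Fin.sum_univ_three, WithLp.equiv_apply]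
      rw [hTx, e1, EuclideanSpace.norm_eq, EuclideanSpace.norm_eq]
      simp only [WithLp.equiv_symm_apply, PiLp.toLp_apply, Fin.sum_univ_three, Matrix.cons_val_zero,
        Matrix.cons_val_one, Matrix.head_cons, Matrix.cons_val_two, Matrix.tail_cons, norm_zero]
      rw [show L * Real.sqrt (‖x 0‖ ^ 2 + ‖x 1‖ ^ 2 + ‖x 2‖ ^ 2)
          = Real.sqrt (L ^ 2 * (‖x 0‖ ^ 2 + ‖x 1‖ ^ 2 + ‖x 2‖ ^ 2)) by
        rw [Real.sqrt_mul (sq_nonneg L), Real.sqrt_sq hL0.le]]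
      apply Real.sqrt_le_sqrt
      simp only [Complex.sq_norm, Complex.normSq_apply, Complex.add_re,
        Complex.add_im, Complex.mul_re, Complex.mul_im, Complex.ofReal_re, Complex.ofReal_im,
        ← Complex.ofReal_pow, Complex.re_ofNat, Complex.im_ofNat]
      set ar := (x 0).re; set ai := (x 0).im
      set br := (x 1).re; set bi := (x 1).im
      set cr := (x 2).re; set ci := (x 2).im
      ring_nf
      have quadQ : ∀ b c : ℝ,
          (4 + t ^ 2) * b ^ 2 + 2 * t * (2 + t ^ 2) * b * c + (t ^ 2 + t ^ 4) * c ^ 2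
            ≤ L ^ 2 * (b ^ 2 + c ^ 2) := by
        intro b c
        have key : (L - 2) * (L ^ 2 * (b ^ 2 + c ^ 2) -
            ((4 + t ^ 2) * b ^ 2 + 2 * t * (2 + t ^ 2) * b * c + (t ^ 2 + t ^ 4) * c ^ 2))
            = (2 + t ^ 2) * ((L - 2) * b - t * c) ^ 2 := by
          linear_combination ((L - 2) * b ^ 2 + (L + t ^ 2) * c ^ 2) * hquad
        nlinarith [sq_nonneg ((L - 2) * b - t * c), key, sq_nonneg (b + c), sq_nonneg (b - c)]
      nlinarith [quadQ br cr, quadQ bi ci,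
        mul_nonneg (sq_nonneg L) (sq_nonneg ar), mul_nonneg (sq_nonneg L) (sq_nonneg ai)]
    · -- lower bound via the eigenvector `(0, t, L - 2)`
      set w : Fin 3 → ℂ := ![0, (t : ℂ), ((L : ℂ) - 2)] with hw
      set v : EuclideanSpace ℂ (Fin 3) := (WithLp.equiv 2 _).symm w with hv
      have hAv : A *ᵥ w = (L : ℂ) • w := by
        funext i
        fin_cases i <;>
          simp [hA, hw, Matrix.mulVec, dotProduct, Fin.sum_univ_three] <;>
          (first | ring1 | linear_combination hquadC | linear_combination -hquadC)
      have hTv : T v = (L : ℂ) • v := by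
        rw [hv, hT, WithLp.equiv_symm_apply, Matrix.toEuclideanCLM_toLp, hAv]
        rfl
      have hvnorm : 0 < ‖v‖ := by
        rw [norm_pos_iff]
        intro h
        have h1 : v 1 = 0 := by rw [h]; rfl
        have : (t : ℂ) = 0 := by simpa [hv, hw, WithLp.equiv_symm_apply, PiLp.toLp_apply] using h1
        exact ht.ne' (by exact_mod_cast this)
      have h1 : L * ‖v‖ ≤ ‖T‖ * ‖v‖ := by
        calc L * ‖v‖ = ‖(L : ℂ) • v‖ := by
              rw [norm_smul, Complex.norm_real, Real.norm_of_nonneg hL0.le]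
          _ = ‖T v‖ := by rw [hTv]
          _ ≤ ‖T‖ * ‖v‖ := T.le_opNorm v
      exact le_of_mul_le_mul_right h1 hvnorm
  -- the normalized defect
  have hstar : star c = c := by
    simp [hc, ← Complex.ofReal_inv, Complex.star_def, Complex.conj_ofReal]
  have hcc : c * c = (((L)⁻¹ : ℝ) : ℂ) := by
    rw [hc, ← hL_def]
    push_cast
    ring
  have hRR : R₁ * R₁ᴴ + R₂ * R₂ᴴ = (((L)⁻¹ : ℝ) : ℂ) • A := by
    rw [hR₁def, hR₂def, Matrix.conjTranspose_smul, Matrix.conjTranspose_smul, hstar]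
    rw [smul_mul_assoc, smul_mul_assoc, mul_smul_comm, mul_smul_comm, smul_smul, smul_smul,
      ← smul_add, h1, hcc]
  -- positive semidefiniteness of the defect of the row contraction
  have hpsd : (1 - (R₁ * R₁ᴴ + R₂ * R₂ᴴ)).PosSemidef := by
    rw [hRR]
    rw [Matrix.posSemidef_iff_dotProduct_mulVec]
    constructor
    · ext i j
      fin_cases i <;> fin_cases j <;>
        simp [hA, Matrix.conjTranspose_apply, Matrix.one_apply, Matrix.smul_apply,
          Matrix.vecHead, Matrix.vecTail, ← Complex.ofReal_pow]
    · intro x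
      simp only [hA, Matrix.sub_mulVec, Matrix.one_mulVec, Matrix.smul_mulVec,
        dotProduct, Matrix.mulVec, Fin.sum_univ_three, Pi.sub_apply, Pi.smul_apply,
        Matrix.cons_val_zero, Matrix.cons_val_one, Matrix.head_cons, Matrix.cons_val_two,
        Matrix.tail_cons, Matrix.head_fin_const, smul_eq_mul, Pi.star_apply]
      rw [Complex.le_def]
      constructor
      · simp [Complex.add_re, Complex.mul_re, Complex.mul_im, Complex.ofReal_re,
          Complex.ofReal_im, Complex.star_def, Complex.conj_re, Complex.conj_im,
          Matrix.vecHead, Matrix.vecTail, ← Complex.ofReal_pow]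
        set ar := (x 0).re; set ai := (x 0).im
        set br := (x 1).re; set bi := (x 1).im
        set cr := (x 2).re; set ci := (x 2).im
        have hu : L * L⁻¹ = 1 := mul_inv_cancel₀ hL0.ne'
        have hE : 0 ≤ L * (ar ^ 2 + ai ^ 2) + (L - 2) * (br ^ 2 + bi ^ 2) -
            2 * t * (br * cr + bi * ci) + (L - t ^ 2) * (cr ^ 2 + ci ^ 2) := by
          nlinarith [sq_nonneg ((L - 2) * br - t * cr), sq_nonneg ((L - 2) * bi - t * ci),
            sq_nonneg ar, sq_nonneg ai, mul_pos hL0 (sub_pos.2 hL2), sq_nonneg br, sq_nonneg bi]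
        nlinarith [mul_nonneg (inv_nonneg.2 hL0.le) hE, hu]
      · simp [Complex.add_im, Complex.mul_re, Complex.mul_im, Complex.ofReal_re,
          Complex.ofReal_im, Complex.star_def, Complex.conj_re, Complex.conj_im,
          Matrix.vecHead, Matrix.vecTail, ← Complex.ofReal_pow]
        ring
  exact ⟨h1, by rw [h1, hnorm], by rw [hR12, hR21], hR11, hR12, hR21, hR22, hpsd⟩
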